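/- With F_n(w) = (1/(2√w))·sqrt(c_n(w)/a_n(w))·sqrt((a_n(w)·c_n(w) − b_n(w)²)/(w·a_n(w)²)), one has ∫_2^∞ F_n(w) dw ≤ n for all positive integers n. -/

import Mathlib

open Finset Real


-- exact identity for partial sums of k^2 x^k
lemma sum_sq_geom_id (x : ℝ) (hx : (1:ℝ) - x ≠ 0) (m : ℕ) :
    ∑ k ∈ Finset.range (m+1), (k:ℝ)^2 * x^k
      = x*(1+x)/(1-x)^3 - x^(m+1) *
        (((m:ℝ)+1)^2/(1-x) + 2*((m:ℝ)+1)*x/(1-x)^2 + x*(1+x)/(1-x)^3) := by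
  induction m with
  | zero =>
      simp only [Nat.zero_add, Finset.range_one, Finset.sum_singleton, Nat.cast_zero, pow_one]
      field_simp
      ring
  | succ m ih =>
      rw [Finset.sum_range_succ, ih]
      push_cast
      field_simp
      ring

lemma sum_sq_geom_le (x : ℝ) (hx0 : 0 ≤ x) (hx1 : x < 1) (m : ℕ) :
    ∑ k ∈ Finset.range (m+1), (k:ℝ)^2 * x^k ≤ x*(1+x)/(1-x)^3 := by
  rw [sum_sq_geom_id x (by linarith) m]
  have h1 : (0:ℝ) < 1 - x := by linarith
  have h2 : (0:ℝ) ≤ x^(m+1) := pow_nonneg hx0 _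
  have h3 : (0:ℝ) ≤ ((m:ℝ)+1)^2/(1-x) + 2*((m:ℝ)+1)*x/(1-x)^2 + x*(1+x)/(1-x)^3 := by
    have hm : (0:ℝ) ≤ (m:ℝ) := Nat.cast_nonneg m
    positivity
  nlinarith [mul_nonneg h2 h3]

noncomputable def aa (n : ℕ) (w : ℝ) : ℝ := ∑ j ∈ Finset.range (n+1), w ^ j

-- inner sum bound, for 2 ≤ w
lemma inner_le (j : ℕ) (w : ℝ) (hw : 2 ≤ w) :
    ∑ i ∈ Finset.range (j+1), ((j:ℝ)-(i:ℝ))^2 * (w^i * w^j)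
      ≤ w^(2*j) * (w⁻¹*(1+w⁻¹)/(1-w⁻¹)^3) := by
  have hw0 : (0:ℝ) < w := by linarith
  have hrefl := Finset.sum_range_reflect
      (fun k => (k:ℝ)^2 * (w^(j-k) * w^j)) (j+1)
  have hL : ∑ i ∈ Finset.range (j+1), ((j:ℝ)-(i:ℝ))^2 * (w^i * w^j)
      = ∑ k ∈ Finset.range (j+1), (k:ℝ)^2 * (w^(j-k) * w^j) := by
    rw [← hrefl]
    apply Finset.sum_congr rfl
    intro i hi
    have hij : i ≤ j := Nat.lt_succ_iff.mp (Finset.mem_range.mp hi)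
    have h1 : j + 1 - 1 - i = j - i := by omega
    rw [h1]
    have h2 : ((j - i : ℕ) : ℝ) = (j:ℝ) - (i:ℝ) := by
      push_cast [Nat.cast_sub hij]; ring
    rw [h2]
    have h3 : j - (j - i) = i := by omega
    rw [h3]
  rw [hL]
  have hterm : ∀ k ∈ Finset.range (j+1),
      (k:ℝ)^2 * (w^(j-k) * w^j) = w^(2*j) * ((k:ℝ)^2 * (w⁻¹)^k) := by
    intro k hk
    have hkj : k ≤ j := Nat.lt_succ_iff.mp (Finset.mem_range.mp hk)
    have : w^(j-k) = w^j * (w^k)⁻¹ := pow_sub₀ w (ne_of_gt hw0) hkj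
    rw [this, inv_pow]
    rw [two_mul, pow_add]
    ring
  rw [Finset.sum_congr rfl hterm, ← Finset.mul_sum]
  have hx0 : (0:ℝ) ≤ w⁻¹ := by positivity
  have hx1 : w⁻¹ < 1 := by
    rw [inv_lt_one_iff₀]; right; linarith
  have := sum_sq_geom_le w⁻¹ hx0 hx1 j
  have hp : (0:ℝ) ≤ w^(2*j) := by positivity
  exact mul_le_mul_of_nonneg_left this hp

-- lower bound for w * aa^2
lemma waa_ge (n : ℕ) (w : ℝ) (hw : 2 ≤ w) :
    w * (∑ j ∈ Finset.range (n+1), w^(2*j)) + 2 * (∑ j ∈ Finset.range (n+1), w^(2*j)) - 2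
      ≤ w * (aa n w)^2 := by
  have hw0 : (0:ℝ) < w := by linarith
  induction n with
  | zero => simp [aa]
  | succ n ih =>
      have han : w^n ≤ aa n w := by
        apply Finset.single_le_sum (f := fun j => w^j)
        · intro i _; positivity
        · exact Finset.self_mem_range_succ n
      have haa : aa (n+1) w = aa n w + w^(n+1) := by
        rw [aa, aa, Finset.sum_range_succ]
      rw [haa, Finset.sum_range_succ]
      have key : w^(2*(n+1)) ≤ w^(n+2) * aa n w := by
        calc w^(2*(n+1)) = w^(n+2) * w^n := by rw [← pow_add]; ring_nf
        _ ≤ w^(n+2) * aa n w := by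
            apply mul_le_mul_of_nonneg_left han (by positivity)
      have hexp : w * (aa n w + w^(n+1))^2
          = w * (aa n w)^2 + 2 * w^(n+2) * aa n w + w * w^(2*(n+1)) := by
        have e1 : w * (w^(n+1))^2 = w * w^(2*(n+1)) := by rw [← pow_mul, Nat.mul_comm]
        have e2 : w * (2 * aa n w * w^(n+1)) = 2 * w^(n+2) * aa n w := by
          rw [pow_succ, pow_succ]; ring
        nlinarith [e1, e2]
      nlinarith [key, pow_nonneg (le_of_lt hw0) (2*(n+1))]

noncomputable def bb (n : ℕ) (w : ℝ) : ℝ := ∑ j ∈ Finset.range (n+1), (j : ℝ) * w ^ j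
noncomputable def cc (n : ℕ) (w : ℝ) : ℝ := ∑ j ∈ Finset.range (n+1), (j : ℝ)^2 * w ^ j


lemma tri_id (n : ℕ) (w : ℝ) :
    aa n w * cc n w - (bb n w)^2
      = ∑ j ∈ Finset.range (n+1), ∑ i ∈ Finset.range (j+1),
          ((j:ℝ)-(i:ℝ))^2 * (w^i * w^j) := by
  induction n with
  | zero => simp [aa, bb, cc]
  | succ n ih =>
      rw [Finset.sum_range_succ (fun j => ∑ i ∈ Finset.range (j+1),
            ((j:ℝ)-(i:ℝ))^2 * (w^i * w^j)), ← ih]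
      have hlast : ∑ i ∈ Finset.range (n+1+1), (((n+1:ℕ):ℝ)-(i:ℝ))^2 * (w^i * w^(n+1))
          = (((n:ℝ)+1)^2 * aa n w - 2*((n:ℝ)+1) * bb n w + cc n w) * w^(n+1) := by
        rw [Finset.sum_range_succ]
        have h0 : (((n+1:ℕ):ℝ)-((n+1:ℕ):ℝ))^2 * (w^(n+1) * w^(n+1)) = 0 := by
          push_cast; ring
        rw [h0, add_zero]
        have hcong : ∀ i ∈ Finset.range (n+1),
            (((n+1:ℕ):ℝ)-(i:ℝ))^2 * (w^i * w^(n+1))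
              = (((n:ℝ)+1)^2 * w^i - 2*((n:ℝ)+1) * ((i:ℝ)*w^i) + (i:ℝ)^2*w^i) * w^(n+1) := by
          intro i _; push_cast; ring
        rw [Finset.sum_congr rfl hcong, ← Finset.sum_mul]
        congr 1
        rw [aa, bb, cc, Finset.mul_sum, Finset.mul_sum, ← Finset.sum_sub_distrib,
          ← Finset.sum_add_distrib]
      rw [hlast]
      simp only [aa, bb, cc, Finset.sum_range_succ]
      push_cast
      ring

lemma var_le (n : ℕ) (hn : 1 ≤ n) (w : ℝ) (hw : 2 ≤ w) :
    aa n w * cc n w - (bb n w)^2 ≤ w^2/(w-1)^3 * (aa n w)^2 := by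
  have hw0 : (0:ℝ) < w := by linarith
  have hw1 : (0:ℝ) < w - 1 := by linarith
  set A : ℝ := ∑ j ∈ Finset.range (n+1), w^(2*j) with hA
  have hT : aa n w * cc n w - (bb n w)^2 ≤ A * (w⁻¹*(1+w⁻¹)/(1-w⁻¹)^3) := by
    rw [tri_id, hA, Finset.sum_mul]
    exact Finset.sum_le_sum (fun j _ => inner_le j w hw)
  have hS : w⁻¹*(1+w⁻¹)/(1-w⁻¹)^3 = w*(w+1)/(w-1)^3 := by
    rw [div_eq_div_iff]
    · field_simp
    · have : (0:ℝ) < 1 - w⁻¹ := by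
        rw [sub_pos, inv_lt_one_iff₀]; right; linarith
      positivity
    · positivity
  rw [hS] at hT
  have hA2 : 2 ≤ A := by
    have hsub : ({0, 1} : Finset ℕ) ⊆ Finset.range (n+1) := by
      intro x hx
      simp only [Finset.mem_insert, Finset.mem_singleton] at hx
      rcases hx with h | h <;> simp [h, Finset.mem_range] <;> omega
    have := Finset.sum_le_sum_of_subset_of_nonneg hsub
      (fun i _ _ => by positivity : ∀ i ∈ Finset.range (n+1),
        i ∉ ({0,1} : Finset ℕ) → (0:ℝ) ≤ w^(2*i))
    have hs : ∑ j ∈ ({0,1} : Finset ℕ), w^(2*j) = 1 + w^2 := by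
      norm_num
    rw [hs] at this
    nlinarith
  have hwa := waa_ge n w hw
  rw [← hA] at hwa
  -- combine: w*(w+1)*A ≤ w^2 * aa^2
  have hkey : w*(w+1)*A ≤ w^2 * (aa n w)^2 := by nlinarith
  calc aa n w * cc n w - (bb n w)^2 ≤ A * (w*(w+1)/(w-1)^3) := hT
    _ = (w*(w+1)*A) / (w-1)^3 := by ring
    _ ≤ (w^2 * (aa n w)^2) / (w-1)^3 := by
        gcongr
    _ = w^2/(w-1)^3 * (aa n w)^2 := by ring

noncomputable def F (n : ℕ) (w : ℝ) : ℝ :=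
  (1 / (2 * Real.sqrt w)) * Real.sqrt (cc n w / aa n w) *
    Real.sqrt ((aa n w * cc n w - (bb n w)^2) / (w * (aa n w)^2))

lemma F_nonneg (n : ℕ) (w : ℝ) : 0 ≤ F n w := by
  rw [F]
  have h1 : 0 ≤ Real.sqrt w := Real.sqrt_nonneg w
  positivity

lemma F_le (n : ℕ) (hn : 1 ≤ n) (w : ℝ) (hw : 2 ≤ w) :
    F n w ≤ (n:ℝ)/2 * (w-1) ^ (-(3/2) : ℝ) := by
  have hw0 : (0:ℝ) < w := by linarith
  have hw1 : (0:ℝ) < w - 1 := by linarith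
  have ha : 0 < aa n w := by
    rw [aa]
    apply Finset.sum_pos (fun i _ => by positivity) ⟨0, Finset.mem_range.mpr (by omega)⟩
  have hcn : cc n w ≤ (n:ℝ)^2 * aa n w := by
    rw [cc, aa, Finset.mul_sum]
    apply Finset.sum_le_sum
    intro j hj
    have hjn : (j:ℝ) ≤ (n:ℝ) := by
      exact_mod_cast Nat.le_of_lt_succ (Finset.mem_range.mp hj)
    have : (j:ℝ)^2 ≤ (n:ℝ)^2 := by nlinarith [Nat.cast_nonneg (α := ℝ) j]
    nlinarith [pow_nonneg hw0.le j]
  have h1 : Real.sqrt (cc n w / aa n w) ≤ (n:ℝ) := by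
    have : cc n w / aa n w ≤ (n:ℝ)^2 := by
      rw [div_le_iff₀ ha]; nlinarith
    calc Real.sqrt (cc n w / aa n w) ≤ Real.sqrt ((n:ℝ)^2) := Real.sqrt_le_sqrt this
      _ = (n:ℝ) := Real.sqrt_sq (Nat.cast_nonneg n)
  have h2 : (aa n w * cc n w - (bb n w)^2) / (w * (aa n w)^2) ≤ w/(w-1)^3 := by
    rw [div_le_iff₀ (by positivity)]
    have := var_le n hn w hw
    calc aa n w * cc n w - (bb n w)^2 ≤ w^2/(w-1)^3 * (aa n w)^2 := this
      _ = w / (w-1)^3 * (w * (aa n w)^2) := by ring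
  have h3 : Real.sqrt ((aa n w * cc n w - (bb n w)^2) / (w * (aa n w)^2))
      ≤ Real.sqrt w / Real.sqrt ((w-1)^3) := by
    calc Real.sqrt ((aa n w * cc n w - (bb n w)^2) / (w * (aa n w)^2))
        ≤ Real.sqrt (w/(w-1)^3) := Real.sqrt_le_sqrt h2
      _ = Real.sqrt w / Real.sqrt ((w-1)^3) := Real.sqrt_div hw0.le _
  have hsw : 0 < Real.sqrt w := Real.sqrt_pos.mpr hw0
  have hrw : (w-1) ^ (-(3/2) : ℝ) = 1 / Real.sqrt ((w-1)^3) := by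
    rw [Real.rpow_neg hw1.le, Real.sqrt_eq_rpow, ← Real.rpow_natCast (w-1) 3,
      ← Real.rpow_mul hw1.le]
    norm_num
  rw [F, hrw]
  have step1 : (1 / (2 * Real.sqrt w)) * Real.sqrt (cc n w / aa n w) *
      Real.sqrt ((aa n w * cc n w - (bb n w)^2) / (w * (aa n w)^2))
      ≤ (1 / (2 * Real.sqrt w)) * (n:ℝ) * (Real.sqrt w / Real.sqrt ((w-1)^3)) := by
    apply mul_le_mul
    · apply mul_le_mul_of_nonneg_left h1 (by positivity)
    · exact h3
    · exact Real.sqrt_nonneg _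
    · positivity
  calc (1 / (2 * Real.sqrt w)) * Real.sqrt (cc n w / aa n w) *
      Real.sqrt ((aa n w * cc n w - (bb n w)^2) / (w * (aa n w)^2))
      ≤ (1 / (2 * Real.sqrt w)) * (n:ℝ) * (Real.sqrt w / Real.sqrt ((w-1)^3)) := step1
    _ = (n:ℝ)/2 * (1 / Real.sqrt ((w-1)^3)) := by
        field_simp

lemma indicator_shift (f : ℝ → ℝ) :
    (Set.Ioi (2:ℝ)).indicator (fun w => f (w-1)) = fun w => (Set.Ioi (1:ℝ)).indicator f (w-1) := by
  funext w
  by_cases h : w ∈ Set.Ioi (2:ℝ)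
  · rw [Set.indicator_of_mem h, Set.indicator_of_mem]
    simp only [Set.mem_Ioi] at h ⊢; linarith
  · rw [Set.indicator_of_notMem h, Set.indicator_of_notMem]
    simp only [Set.mem_Ioi] at h ⊢; intro hc; exact h (by linarith)

lemma indicator_shift' :
    (Set.Ioi (2:ℝ)).indicator (fun w => (w-1) ^ (-(3/2):ℝ))
      = fun w => (Set.Ioi (1:ℝ)).indicator (fun u : ℝ => u ^ (-(3/2):ℝ)) (w-1) :=
  indicator_shift (fun u : ℝ => u ^ (-(3/2):ℝ))

lemma g_integrable :
    MeasureTheory.IntegrableOn (fun w : ℝ => (w-1) ^ (-(3/2):ℝ)) (Set.Ioi (2:ℝ)) := by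
  have hbase : MeasureTheory.IntegrableOn (fun u : ℝ => u ^ (-(3/2):ℝ)) (Set.Ioi (1:ℝ)) :=
    integrableOn_Ioi_rpow_of_lt (by norm_num) one_pos
  have h1 : MeasureTheory.Integrable
      ((Set.Ioi (1:ℝ)).indicator (fun u : ℝ => u ^ (-(3/2):ℝ))) :=
    (MeasureTheory.integrable_indicator_iff measurableSet_Ioi).2 hbase
  have h2 := h1.comp_sub_right 1
  have h3 : MeasureTheory.Integrable
      ((Set.Ioi (2:ℝ)).indicator (fun w => (w-1) ^ (-(3/2):ℝ))) := by
    rw [indicator_shift']; exact h2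
  exact (MeasureTheory.integrable_indicator_iff measurableSet_Ioi).1 h3

lemma g_integral : ∫ w in Set.Ioi (2:ℝ), (w-1) ^ (-(3/2):ℝ) = 2 := by
  rw [← MeasureTheory.integral_indicator measurableSet_Ioi, indicator_shift',
    MeasureTheory.integral_sub_right_eq_self
      ((Set.Ioi (1:ℝ)).indicator (fun u : ℝ => u ^ (-(3/2):ℝ))) 1,
    MeasureTheory.integral_indicator measurableSet_Ioi,
    integral_Ioi_rpow_of_lt (by norm_num) one_pos]
  rw [Real.one_rpow]
  norm_num

theorem stmt9 (n : ℕ) (hn : 1 ≤ n) :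
    ∫ w in Set.Ioi (2 : ℝ), F n w ≤ (n : ℝ) := by
  have hint : MeasureTheory.IntegrableOn
      (fun w => (n:ℝ)/2 * (w-1) ^ (-(3/2):ℝ)) (Set.Ioi (2:ℝ)) :=
    g_integrable.const_mul _
  have hle : ∫ w in Set.Ioi (2:ℝ), F n w
      ≤ ∫ w in Set.Ioi (2:ℝ), (n:ℝ)/2 * (w-1) ^ (-(3/2):ℝ) := by
    apply MeasureTheory.integral_mono_of_nonneg
    · exact Filter.Eventually.of_forall (fun w => F_nonneg n w)
    · exact hint
    · filter_upwards [MeasureTheory.ae_restrict_mem measurableSet_Ioi] with w hw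
      exact F_le n hn w (le_of_lt (Set.mem_Ioi.mp hw))
  have heq : ∫ w in Set.Ioi (2:ℝ), (n:ℝ)/2 * (w-1) ^ (-(3/2):ℝ) = (n:ℝ) := by
    rw [MeasureTheory.integral_const_mul, g_integral]
    ring
  linarith
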